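/- Let n ∈ ℕ, d ∈ ℕ₀, let K ⊆ ℝⁿ be closed with nonempty interior, and let S ⊆ Pos(K)_{≤2d}. Define the linear functional l : ℝ[x₁,…,xₙ]_{≤2d} → ℝ by l(p) := ∫_K p(x)·e^{−‖x‖²} dx, let f be a polynomial in the interior (taken inside ℝ[x₁,…,xₙ]_{≤2d}) of Σℝ[x₁,…,xₙ]_{≤d}², and define A : ℝ[x₁,…,xₙ]_{≤2d} → ℝ[x₁,…,xₙ]_{≤2d} by Ap := l(p)·f. Then there exists τ ≥ 0 such that e^{tA}S ⊆ Σℝ[x₁,…,xₙ]_{≤d}² for all t ≥ τ. -/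

import Mathlib

open MvPolynomial Module

/-- Operator exponential `e^A` of an endomorphism of a finite-dimensional real vector
space, `e^A = ∑_{k≥0} A^k/k!`, realized through the matrix exponential in a basis. -/
noncomputable def endExp {M : Type*} [AddCommGroup M] [Module ℝ M] [FiniteDimensional ℝ M]
    (A : Module.End ℝ M) : Module.End ℝ M :=
  (Matrix.toLin (Module.finBasis ℝ M) (Module.finBasis ℝ M))
    (NormedSpace.exp ((LinearMap.toMatrix (Module.finBasis ℝ M) (Module.finBasis ℝ M)) A))

/-- The interior of a subset of a finite-dimensional real vector space with respect to its
standard (unique Hausdorff vector space) topology, transported through coordinates. -/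
noncomputable def interiorIn {M : Type*} [AddCommGroup M] [Module ℝ M] [FiniteDimensional ℝ M]
    (C : Set M) : Set M :=
  (Module.finBasis ℝ M).equivFun ⁻¹' interior ((Module.finBasis ℝ M).equivFun '' C)

/-- `Pos n K`: polynomials in `n` variables that are nonnegative on `K ⊆ ℝⁿ`. -/
def Pos (n : ℕ) (K : Set (Fin n → ℝ)) : Set (MvPolynomial (Fin n) ℝ) :=
  {p | ∀ x ∈ K, 0 ≤ eval x p}

/-- `SOSle n d`: finite sums of squares of polynomials of total degree at most `d`. -/
def SOSle (n d : ℕ) : Set (MvPolynomial (Fin n) ℝ) :=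
  {p | ∃ (m : ℕ) (q : Fin m → MvPolynomial (Fin n) ℝ),
    (∀ i, (q i).totalDegree ≤ d) ∧ p = ∑ i, q i ^ 2}

open MeasureTheory

section Aux

lemma exp_smul_idem {𝔸 : Type*} [NormedRing 𝔸] [NormedAlgebra ℝ 𝔸] [CompleteSpace 𝔸]
    (s : ℝ) (Q : 𝔸) (hQ : Q * Q = Q) :
    NormedSpace.exp (s • Q) = 1 + (Real.exp s - 1) • Q := by
  have hpow : ∀ k : ℕ, Q ^ (k + 1) = Q := by
    intro k; induction k with
    | zero => simp
    | succ k ih => rw [pow_succ, ih, hQ]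
  have h1 : HasSum (fun k : ℕ => s ^ (k + 1) / (Nat.factorial (k + 1) : ℝ)) (Real.exp s - 1) := by
    have h := NormedSpace.expSeries_div_hasSum_exp s
    rw [← Real.exp_eq_exp_ℝ] at h
    have h' := (hasSum_nat_add_iff' (f := fun n : ℕ => s ^ n / (Nat.factorial n : ℝ)) 1).2 h
    simpa using h'
  have h2 : HasSum (fun k : ℕ => (s ^ (k + 1) / (Nat.factorial (k + 1) : ℝ)) • Q) ((Real.exp s - 1) • Q) :=
    h1.smul_const Q
  have h3 : HasSum (fun k : ℕ => ((Nat.factorial k : ℝ)⁻¹) • (s • Q) ^ k)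
      (1 + (Real.exp s - 1) • Q) := by
    apply (hasSum_nat_add_iff' (f := fun k : ℕ => ((Nat.factorial k : ℝ)⁻¹) • (s • Q) ^ k) 1).1
    have heq : (fun n : ℕ => (((Nat.factorial (n + 1) : ℝ) : ℝ)⁻¹) • (s • Q) ^ (n + 1)) =
        (fun n : ℕ => (s ^ (n + 1) / (Nat.factorial (n + 1) : ℝ)) • Q) := by
      funext n
      rw [smul_pow, hpow, smul_smul]
      congr 1
      field_simp
    rw [show (fun n : ℕ => (((Nat.factorial (n + 1) : ℝ) :ℝ)⁻¹) • (s • Q) ^ (n + 1)) = _ from heq]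
    convert h2 using 1
    case e'_3 => rfl
    simp
  rw [NormedSpace.exp_eq_tsum (𝕂 := ℝ)]
  exact h3.tsum_eq

lemma matrix_exp_smul_idem {N : ℕ} (s : ℝ) (Q : Matrix (Fin N) (Fin N) ℝ) (hQ : Q * Q = Q) :
    NormedSpace.exp (s • Q) = 1 + (Real.exp s - 1) • Q := by
  letI : SeminormedRing (Matrix (Fin N) (Fin N) ℝ) := Matrix.linftyOpSemiNormedRing
  letI : NormedRing (Matrix (Fin N) (Fin N) ℝ) := Matrix.linftyOpNormedRing
  letI : NormedAlgebra ℝ (Matrix (Fin N) (Fin N) ℝ) := Matrix.linftyOpNormedAlgebra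
  exact exp_smul_idem s Q hQ

lemma aux_pow_le (k : ℕ) (x : ℝ) : |x| ^ k ≤ 1 + (x ^ 2) ^ k := by
  rcases le_total (|x|) 1 with h | h
  · have h1 : |x| ^ k ≤ 1 := pow_le_one₀ (abs_nonneg x) h
    have h2 : (0:ℝ) ≤ (x ^ 2) ^ k := by positivity
    linarith
  · have h0 : |x| ≤ |x| ^ 2 := by nlinarith [abs_nonneg x]
    have h1 : |x| ^ k ≤ (|x| ^ 2) ^ k := pow_le_pow_left₀ (abs_nonneg x) h0 k
    rw [sq_abs] at h1
    linarith
lemma aux_sq_pow_le (k : ℕ) (x : ℝ) :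
    (x ^ 2) ^ k * Real.exp (-x ^ 2) ≤
      (2 ^ k * (Nat.factorial k : ℝ)) * Real.exp (-(1/2) * x ^ 2) := by
  have hy : (0:ℝ) ≤ x ^ 2 / 2 := by positivity
  have hfac : (0:ℝ) < (Nat.factorial k : ℝ) := by
    exact_mod_cast Nat.factorial_pos k
  have h1 : (x ^ 2 / 2) ^ k / (Nat.factorial k : ℝ) ≤ Real.exp (x ^ 2 / 2) := by
    calc (x ^ 2 / 2) ^ k / (Nat.factorial k : ℝ)
        ≤ ∑ i ∈ Finset.range (k + 1), (x ^ 2 / 2) ^ i / (Nat.factorial i : ℝ) := by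
          apply Finset.single_le_sum (f := fun i => (x ^ 2 / 2) ^ i / (Nat.factorial i : ℝ))
          · intro i _
            positivity
          · exact Finset.self_mem_range_succ k
      _ ≤ Real.exp (x ^ 2 / 2) := Real.sum_le_exp_of_nonneg hy (k + 1)
  have h2 : (x ^ 2) ^ k ≤ (2 ^ k * (Nat.factorial k : ℝ)) * Real.exp (x ^ 2 / 2) := by
    have := mul_le_mul_of_nonneg_left h1 (le_of_lt (by positivity : (0:ℝ) < 2 ^ k * (Nat.factorial k : ℝ)))
    calc (x ^ 2) ^ k = (2 ^ k * (Nat.factorial k : ℝ)) * ((x ^ 2 / 2) ^ k / (Nat.factorial k : ℝ)) := by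
          field_simp
          rw [← mul_pow]; congr 1; ring
      _ ≤ _ := this
  have h3 := mul_le_mul_of_nonneg_right h2 (le_of_lt (Real.exp_pos (-x ^ 2)))
  calc (x ^ 2) ^ k * Real.exp (-x ^ 2)
      ≤ (2 ^ k * (Nat.factorial k : ℝ)) * Real.exp (x ^ 2 / 2) * Real.exp (-x ^ 2) := h3
    _ = (2 ^ k * (Nat.factorial k : ℝ)) * Real.exp (-(1/2) * x ^ 2) := by
        rw [mul_assoc, ← Real.exp_add]
        ring_nf

lemma int1d (k : ℕ) : Integrable (fun x : ℝ => x ^ k * Real.exp (-x ^ 2)) := by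
  have hg2 := integrable_exp_neg_mul_sq (b := (1:ℝ)) one_pos
  have hg1 := integrable_exp_neg_mul_sq (b := (1/2:ℝ)) (by norm_num)
  refine (hg2.add (hg1.const_mul (2 ^ k * (Nat.factorial k : ℝ)))).mono ?_ ?_
  · apply Continuous.aestronglyMeasurable
    fun_prop
  · filter_upwards with x
    have hC : (0:ℝ) ≤ 2 ^ k * (Nat.factorial k : ℝ) := by positivity
    have e1 : (0:ℝ) < Real.exp (-1 * x ^ 2) := Real.exp_pos _
    have e2 : (0:ℝ) < Real.exp (-(1/2) * x ^ 2) := Real.exp_pos _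
    simp only [Pi.add_apply]
    rw [Real.norm_eq_abs, Real.norm_eq_abs, abs_mul, abs_pow, abs_of_pos (Real.exp_pos _)]
    rw [abs_of_pos (by positivity : (0:ℝ) < Real.exp (-1 * x ^ 2) + 2 ^ k * (Nat.factorial k : ℝ) * Real.exp (-(1/2) * x ^ 2))]
    have b1 := aux_pow_le k x
    have b2 := aux_sq_pow_le k x
    have hexp : Real.exp (-1 * x ^ 2) = Real.exp (-x ^ 2) := by norm_num
    rw [hexp]
    have := mul_le_mul_of_nonneg_right b1 (le_of_lt (Real.exp_pos (-x ^ 2)))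
    calc |x| ^ k * Real.exp (-x ^ 2)
        ≤ (1 + (x ^ 2) ^ k) * Real.exp (-x ^ 2) := this
      _ = Real.exp (-x ^ 2) + (x ^ 2) ^ k * Real.exp (-x ^ 2) := by ring
      _ ≤ Real.exp (-x ^ 2) + 2 ^ k * (Nat.factorial k : ℝ) * Real.exp (-(1/2) * x ^ 2) := by
          linarith

lemma intMon (n : ℕ) (kk : Fin n → ℕ) :
    Integrable (fun x : Fin n → ℝ => (∏ i, x i ^ kk i) * Real.exp (-∑ i, x i ^ 2)) := by
  have heq : (fun x : Fin n → ℝ => (∏ i, x i ^ kk i) * Real.exp (-∑ i, x i ^ 2)) =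
      fun x => ∏ i, (x i ^ kk i * Real.exp (-(x i) ^ 2)) := by
    funext x
    rw [Finset.prod_mul_distrib]
    congr 1
    rw [← Real.exp_sum]
    congr 1
    simp
  rw [heq]
  exact Integrable.fintype_prod (f := fun (i : Fin n) (t : ℝ) => t ^ kk i * Real.exp (-t ^ 2))
    (fun i => int1d (kk i))

lemma intPoly (n : ℕ) (p : MvPolynomial (Fin n) ℝ) :
    Integrable (fun x : Fin n → ℝ => eval x p * Real.exp (-∑ i, x i ^ 2)) := by
  have heq : (fun x : Fin n → ℝ => eval x p * Real.exp (-∑ i, x i ^ 2)) =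
      fun x => ∑ s ∈ p.support, (coeff s p * ∏ i, x i ^ s i) * Real.exp (-∑ i, x i ^ 2) := by
    funext x
    rw [eval_eq', Finset.sum_mul]
  rw [heq]
  apply integrable_finset_sum
  intro s hs
  have := (intMon n (fun i => s i)).const_mul (coeff s p)
  simpa [mul_assoc] using this

lemma poly_zero_of_open {n : ℕ} {p : MvPolynomial (Fin n) ℝ} {U : Set (Fin n → ℝ)}
    (hU : IsOpen U) (hne : U.Nonempty) (hz : ∀ x ∈ U, eval x p = 0) : p = 0 := by
  obtain ⟨x₀, hx₀⟩ := hne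
  have han : AnalyticOnNhd ℝ (fun x : Fin n → ℝ => eval x p) Set.univ :=
    AnalyticOnNhd.eval_mvPolynomial p
  have hev : (fun x : Fin n → ℝ => eval x p) =ᶠ[nhds x₀] 0 :=
    Filter.eventually_of_mem (hU.mem_nhds hx₀) hz
  have hall := han.eqOn_zero_of_preconnected_of_eventuallyEq_zero
    isPreconnected_univ (Set.mem_univ x₀) hev
  apply MvPolynomial.funext (q := 0)
  intro x
  simpa using hall (Set.mem_univ x)

lemma continuous_evalp {n : ℕ} (p : MvPolynomial (Fin n) ℝ) :
    Continuous (fun x : Fin n → ℝ => eval x p) := by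
  rw [continuous_iff_continuousAt]
  intro x
  exact (AnalyticOnNhd.eval_mvPolynomial p x (Set.mem_univ x)).continuousAt

lemma integral_pos {n : ℕ} {K : Set (Fin n → ℝ)} (hKcl : IsClosed K)
    (hKint : (interior K).Nonempty) {p : MvPolynomial (Fin n) ℝ}
    (hp : p ∈ Pos n K) (hp0 : p ≠ 0) :
    0 < ∫ x in K, eval x p * Real.exp (-∑ i, x i ^ 2) := by
  set g : (Fin n → ℝ) → ℝ := fun x => eval x p * Real.exp (-∑ i, x i ^ 2) with hg
  have hgc : Continuous g := by
    apply Continuous.mul (continuous_evalp p)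
    fun_prop
  have hgK : ∀ x ∈ K, 0 ≤ g x := fun x hx =>
    mul_nonneg (hp x hx) (Real.exp_pos _).le
  have hex : ∃ x₀ ∈ interior K, 0 < eval x₀ p := by
    by_contra h
    push_neg at h
    apply hp0
    apply poly_zero_of_open isOpen_interior hKint
    intro x hx
    exact le_antisymm (h x hx) (hp x (interior_subset hx))
  obtain ⟨x₀, hx₀U, hx₀⟩ := hex
  rw [setIntegral_pos_iff_support_of_nonneg_ae
    ((ae_restrict_iff' hKcl.measurableSet).2 (Filter.Eventually.of_forall hgK))
    (intPoly n p).integrableOn]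
  set V := interior K ∩ g ⁻¹' Set.Ioi 0 with hV
  have hVopen : IsOpen V := isOpen_interior.inter (isOpen_Ioi.preimage hgc)
  have hVne : V.Nonempty := ⟨x₀, hx₀U, by
    simp only [Set.mem_preimage, Set.mem_Ioi]
    exact mul_pos hx₀ (Real.exp_pos _)⟩
  have hVsub : V ⊆ Function.support g ∩ K := by
    rintro v ⟨hv1, hv2⟩
    exact ⟨ne_of_gt hv2, interior_subset hv1⟩
  exact lt_of_lt_of_le (hVopen.measure_pos volume hVne) (measure_mono hVsub)

lemma sos_zero (n d : ℕ) : (0 : MvPolynomial (Fin n) ℝ) ∈ SOSle n d :=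
  ⟨0, fun _ => 0, fun i => by simp, by simp⟩

lemma sos_smul {n d : ℕ} {p : MvPolynomial (Fin n) ℝ} {c : ℝ} (hc : 0 ≤ c)
    (hp : p ∈ SOSle n d) : c • p ∈ SOSle n d := by
  obtain ⟨m, q, hdeg, rfl⟩ := hp
  refine ⟨m, fun i => Real.sqrt c • q i, fun i => ?_, ?_⟩
  · exact le_trans (totalDegree_smul_le _ _) (hdeg i)
  · rw [Finset.smul_sum]
    apply Finset.sum_congr rfl
    intro i _
    rw [smul_pow, Real.sq_sqrt hc]

lemma sos_eval_nonneg {n d : ℕ} {p : MvPolynomial (Fin n) ℝ} (hp : p ∈ SOSle n d)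
    (x : Fin n → ℝ) : 0 ≤ eval x p := by
  obtain ⟨m, q, -, rfl⟩ := hp
  rw [map_sum]
  apply Finset.sum_nonneg
  intro i _
  rw [map_pow]
  exact sq_nonneg _

lemma pos_smul {n : ℕ} {K : Set (Fin n → ℝ)} {p : MvPolynomial (Fin n) ℝ} {a : ℝ}
    (ha : 0 ≤ a) (hp : p ∈ Pos n K) : a • p ∈ Pos n K := fun x hx => by
  rw [smul_eval]; exact mul_nonneg ha (hp x hx)


lemma endExp_eq_of_sq {M : Type*} [AddCommGroup M] [Module ℝ M] [FiniteDimensional ℝ M]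
    (A : Module.End ℝ M) (c : ℝ) (hc : c ≠ 0) (hA2 : A ∘ₗ A = c • A) :
    endExp A = LinearMap.id + ((Real.exp c - 1) / c) • A := by
  set b := Module.finBasis ℝ M
  set B := LinearMap.toMatrix b b A with hB
  have hBB : B * B = c • B := by
    rw [hB, ← LinearMap.toMatrix_comp b b b A A, hA2, _root_.map_smul]
  have hQ : (c⁻¹ • B) * (c⁻¹ • B) = c⁻¹ • B := by
    rw [smul_mul_assoc, mul_smul_comm, hBB, smul_smul, smul_smul]
    congr 1
    field_simp
  have hsB : B = c • (c⁻¹ • B) := by rw [smul_smul, mul_inv_cancel₀ hc, one_smul]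
  have hexp : NormedSpace.exp B = 1 + (Real.exp c - 1) • (c⁻¹ • B) := by
    conv_lhs => rw [hsB]
    exact matrix_exp_smul_idem c _ hQ
  unfold endExp
  rw [← hB, hexp, map_add, _root_.map_smul, _root_.map_smul]
  rw [Matrix.toLin_one, Matrix.toLin_toMatrix]
  rw [smul_smul, div_eq_mul_inv]

noncomputable def intL (n d' : ℕ) (K : Set (Fin n → ℝ)) :
    restrictTotalDegree (Fin n) ℝ d' →ₗ[ℝ] ℝ where
  toFun p := ∫ x in K, eval x (p : MvPolynomial (Fin n) ℝ) * Real.exp (-∑ i, x i ^ 2)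
  map_add' p q := by
    simp only [Submodule.coe_add, map_add, add_mul]
    exact integral_add ((intPoly n _).integrableOn) ((intPoly n _).integrableOn)
  map_smul' a p := by
    simp only [Submodule.coe_smul, smul_eval, RingHom.id_apply, smul_eq_mul, mul_assoc]
    exact integral_const_mul a _

noncomputable def evalL (n d' : ℕ) (x : Fin n → ℝ) :
    restrictTotalDegree (Fin n) ℝ d' →ₗ[ℝ] ℝ where
  toFun p := eval x (p : MvPolynomial (Fin n) ℝ)
  map_add' p q := by simp
  map_smul' a p := by simp [smul_eval]

end Aux


set_option maxHeartbeats 1000000 in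
set_option synthInstance.maxHeartbeats 400000 in
theorem stmt_2 (n : ℕ) (hn : 0 < n) (d : ℕ) (K : Set (Fin n → ℝ))
    (hKcl : IsClosed K) (hKint : (interior K).Nonempty)
    (S : Set (restrictTotalDegree (Fin n) ℝ (2 * d)))
    (hS : ∀ p ∈ S, (p : MvPolynomial (Fin n) ℝ) ∈ Pos n K)
    (f : restrictTotalDegree (Fin n) ℝ (2 * d))
    (hf : f ∈ interiorIn {q : restrictTotalDegree (Fin n) ℝ (2 * d) |
      (q : MvPolynomial (Fin n) ℝ) ∈ SOSle n d})
    (A : Module.End ℝ (restrictTotalDegree (Fin n) ℝ (2 * d)))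
    (hA : ∀ p : restrictTotalDegree (Fin n) ℝ (2 * d),
      A p = (∫ x in K, eval x (p : MvPolynomial (Fin n) ℝ) * Real.exp (-∑ i, x i ^ 2)) • f) :
    ∃ τ : ℝ, 0 ≤ τ ∧ ∀ t : ℝ, τ ≤ t → ∀ p ∈ S,
      ((endExp (t • A) p : restrictTotalDegree (Fin n) ℝ (2 * d)) :
        MvPolynomial (Fin n) ℝ) ∈ SOSle n d := by
  set e := (Module.finBasis ℝ (restrictTotalDegree (Fin n) ℝ (2 * d))).equivFun with he
  set l := intL n (2 * d) K with hl
  have hlA : ∀ p : restrictTotalDegree (Fin n) ℝ (2 * d), A p = l p • f := fun p => hA p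
  -- Step A: the ball inside the SOS cone
  obtain ⟨ε, hε, hball⟩ : ∃ ε > 0, ∀ q : restrictTotalDegree (Fin n) ℝ (2 * d),
      dist (e q) (e f) < ε → (q : MvPolynomial (Fin n) ℝ) ∈ SOSle n d := by
    have h1 : e f ∈ interior (e '' {q : restrictTotalDegree (Fin n) ℝ (2 * d) | (q : MvPolynomial (Fin n) ℝ) ∈ SOSle n d}) := hf
    rw [mem_interior_iff_mem_nhds, Metric.mem_nhds_iff] at h1
    obtain ⟨ε, hε, hb⟩ := h1
    refine ⟨ε, hε, fun q hq => ?_⟩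
    have : e q ∈ e '' {q : restrictTotalDegree (Fin n) ℝ (2 * d) | (q : MvPolynomial (Fin n) ℝ) ∈ SOSle n d} :=
      hb (Metric.mem_ball.2 hq)
    obtain ⟨q', hq', heq⟩ := this
    rwa [← e.injective heq]
  -- Step B: f is positive and nonzero
  have hfC : (f : MvPolynomial (Fin n) ℝ) ∈ SOSle n d := hball f (by simp [hε])
  have hfPos : (f : MvPolynomial (Fin n) ℝ) ∈ Pos n K := fun x _ => sos_eval_nonneg hfC x
  have hf0 : (f : MvPolynomial (Fin n) ℝ) ≠ 0 := by
    have h1M : (1 : MvPolynomial (Fin n) ℝ) ∈ restrictTotalDegree (Fin n) ℝ (2 * d) := by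
      rw [mem_restrictTotalDegree]
      simp
    set oneM := (⟨1, h1M⟩ : restrictTotalDegree (Fin n) ℝ (2 * d)) with honeM
    set δ := ε / (2 * (‖e oneM‖ + 1)) with hδ
    have hδ0 : 0 < δ := by positivity
    have hqdist : dist (e (f - δ • oneM)) (e f) < ε := by
      rw [dist_eq_norm, ← map_sub]
      have : f - δ • oneM - f = -(δ • oneM) := by abel
      rw [this, map_neg, _root_.map_smul, norm_neg, norm_smul, Real.norm_eq_abs,
        abs_of_pos hδ0]
      have h1 : δ * ‖e oneM‖ ≤ δ * (‖e oneM‖ + 1) := by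
        apply mul_le_mul_of_nonneg_left _ hδ0.le
        linarith
      have h2 : δ * (‖e oneM‖ + 1) = ε / 2 := by
        rw [hδ]
        field_simp
      linarith
    have hqC := hball _ hqdist
    have := sos_eval_nonneg hqC 0
    intro h0
    rw [Submodule.coe_sub, Submodule.coe_smul, honeM] at this
    simp only [h0, map_sub, map_zero, smul_eval, map_one, mul_one] at this
    linarith
  have hc : 0 < l f := integral_pos hKcl hKint hfPos hf0
  -- Step D: A ∘ₗ A = (l f) • A
  have hA2 : A ∘ₗ A = l f • A := by
    apply LinearMap.ext
    intro p
    simp only [LinearMap.comp_apply, LinearMap.smul_apply]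
    rw [hlA p, _root_.map_smul, hlA f, smul_smul, smul_smul]
    congr 1
    ring
  -- Step E: uniform lower bound on l over Pos
  obtain ⟨δp, hδp, hkey⟩ : ∃ δp > 0, ∀ p : restrictTotalDegree (Fin n) ℝ (2 * d),
      (p : MvPolynomial (Fin n) ℝ) ∈ Pos n K → δp * ‖e p‖ ≤ l p := by
    classical
    set T : Set (Fin (finrank ℝ (restrictTotalDegree (Fin n) ℝ (2 * d))) → ℝ) :=
      {v | ‖v‖ = 1} ∩ ⋂ x ∈ K, {v | 0 ≤ evalL n (2 * d) x (e.symm v)} with hT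
    have hTmem : ∀ v, v ∈ T ↔ (‖v‖ = 1 ∧ ((e.symm v : restrictTotalDegree (Fin n) ℝ (2 * d)) : MvPolynomial (Fin n) ℝ) ∈ Pos n K) := by
      intro v
      simp only [hT, Set.mem_inter_iff, Set.mem_setOf_eq, Set.mem_iInter]
      rfl
    have hTclosed : IsClosed T := by
      apply IsClosed.inter
      · have : {v : Fin (finrank ℝ (restrictTotalDegree (Fin n) ℝ (2 * d))) → ℝ | ‖v‖ = 1} = (fun v => ‖v‖) ⁻¹' {1} := rfl
        rw [this]
        exact isClosed_singleton.preimage continuous_norm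
      · apply isClosed_biInter
        intro x hx
        apply isClosed_le continuous_const
        exact ((evalL n (2 * d) x).comp e.symm.toLinearMap).continuous_of_finiteDimensional
    have hTcpt : IsCompact T := by
      apply (isCompact_sphere (0 : Fin (finrank ℝ (restrictTotalDegree (Fin n) ℝ (2 * d))) → ℝ) 1).of_isClosed_subset hTclosed
      intro v hv
      rw [mem_sphere_zero_iff_norm]
      exact ((hTmem v).1 hv).1
    have hscale : ∀ p : restrictTotalDegree (Fin n) ℝ (2 * d), p ≠ 0 → (p : MvPolynomial (Fin n) ℝ) ∈ Pos n K →
        (‖e p‖⁻¹ • e p) ∈ T := by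
      intro p hp0 hpPos
      rw [hTmem]
      have hep0 : e p ≠ 0 := fun h => hp0 (by simpa using e.map_eq_zero_iff.1 h)
      constructor
      · exact norm_smul_inv_norm hep0
      · have : e.symm (‖e p‖⁻¹ • e p) = ‖e p‖⁻¹ • p := by
          rw [_root_.map_smul, e.symm_apply_apply]
        rw [this, Submodule.coe_smul]
        exact pos_smul (by positivity) hpPos
    rcases Set.eq_empty_or_nonempty T with hTe | hTne
    · refine ⟨1, one_pos, fun p hpPos => ?_⟩
      by_cases hp0 : p = 0
      · simp [hp0]
      · exact absurd (hscale p hp0 hpPos) (by simp [hTe])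
    · obtain ⟨v₀, hv₀T, hmin⟩ := hTcpt.exists_isMinOn hTne
        ((l.comp e.symm.toLinearMap).continuous_of_finiteDimensional.continuousOn)
      have hv₀ := (hTmem v₀).1 hv₀T
      have hv₀ne : ((e.symm v₀ : restrictTotalDegree (Fin n) ℝ (2 * d)) : MvPolynomial (Fin n) ℝ) ≠ 0 := by
        intro h
        have h1 : (e.symm v₀ : restrictTotalDegree (Fin n) ℝ (2 * d)) = 0 := by exact_mod_cast Subtype.ext h
        have h2 : v₀ = 0 := by
          have := congrArg e h1
          simpa using this
        rw [h2] at hv₀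
        simp at hv₀
      have hδp0 : 0 < l (e.symm v₀) := integral_pos hKcl hKint hv₀.2 hv₀ne
      refine ⟨l (e.symm v₀), hδp0, fun p hpPos => ?_⟩
      by_cases hp0 : p = 0
      · simp [hp0]
      · have hvT := hscale p hp0 hpPos
        have hsymm : e.symm (‖e p‖⁻¹ • e p) = ‖e p‖⁻¹ • p := by
          rw [_root_.map_smul, e.symm_apply_apply]
        have hle : l (e.symm v₀) ≤ ‖e p‖⁻¹ * l p := by
          have h4 : l (e.symm v₀) ≤ l (e.symm (‖e p‖⁻¹ • e p)) := hmin hvT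
          rwa [hsymm, _root_.map_smul, smul_eq_mul] at h4
        have hep0 : e p ≠ 0 := fun h => hp0 (by simpa using e.map_eq_zero_iff.1 h)
        have hepn : 0 < ‖e p‖ := norm_pos_iff.2 hep0
        calc l (e.symm v₀) * ‖e p‖ ≤ (‖e p‖⁻¹ * l p) * ‖e p‖ :=
              mul_le_mul_of_nonneg_right hle hepn.le
          _ = l p := by field_simp
  -- Step F: conclusion
  refine ⟨(δp * ε)⁻¹ + 1, by positivity, ?_⟩
  intro t ht p hpS
  by_cases hp0 : p = 0
  · rw [hp0, map_zero]
    exact sos_zero n d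
  · have ht0 : 0 < t := lt_of_lt_of_le (by positivity) ht
    have htc : (0:ℝ) < t * l f := mul_pos ht0 hc
    have hA2' : (t • A) ∘ₗ (t • A) = (t * l f) • (t • A) := by
      rw [LinearMap.smul_comp, LinearMap.comp_smul, hA2, smul_smul, smul_smul, smul_smul]
      congr 1
      ring
    have hform := endExp_eq_of_sq (t • A) (t * l f) (ne_of_gt htc) hA2'
    set u : ℝ := (Real.exp (t * l f) - 1) / l f with hu
    have hut : t ≤ u := by
      rw [hu, le_div_iff₀ hc]
      have := Real.add_one_le_exp (t * l f)
      linarith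
    have hlp : δp * ‖e p‖ ≤ l p := hkey p (hS p hpS)
    have hep0 : e p ≠ 0 := fun h => hp0 (by simpa using e.map_eq_zero_iff.1 h)
    have hepn : 0 < ‖e p‖ := norm_pos_iff.2 hep0
    have hlp0 : 0 < l p := lt_of_lt_of_le (by positivity) hlp
    set r : ℝ := u * l p with hr
    have hr0 : 0 < r := mul_pos (lt_of_lt_of_le ht0 hut) hlp0
    have happ : endExp (t • A) p = p + r • f := by
      rw [hform]
      simp only [LinearMap.add_apply, LinearMap.smul_apply, LinearMap.id_apply]
      rw [hlA p, smul_smul, smul_smul]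
      congr 2
      rw [hr, hu]
      field_simp
    have hdist : dist (e (f + r⁻¹ • p)) (e f) < ε := by
      rw [dist_eq_norm, ← map_sub]
      have h1 : f + r⁻¹ • p - f = r⁻¹ • p := by abel
      rw [h1, _root_.map_smul, norm_smul, Real.norm_eq_abs, abs_of_pos (by positivity)]
      rw [inv_mul_lt_iff₀ hr0]
      have step1 : ((δp * ε)⁻¹ + 1) * (δp * ε) = 1 + δp * ε := by
        field_simp
      have step2 : ((δp * ε)⁻¹ + 1) * δp * ‖e p‖ * ε ≤ u * l p * ε := by
        have h3 : ((δp * ε)⁻¹ + 1) * (δp * ‖e p‖) ≤ u * l p := by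
          calc ((δp * ε)⁻¹ + 1) * (δp * ‖e p‖) ≤ t * (δp * ‖e p‖) :=
                mul_le_mul_of_nonneg_right ht (by positivity)
            _ ≤ u * (δp * ‖e p‖) := mul_le_mul_of_nonneg_right hut (by positivity)
            _ ≤ u * l p := mul_le_mul_of_nonneg_left hlp
                (le_trans ht0.le hut)
        calc ((δp * ε)⁻¹ + 1) * δp * ‖e p‖ * ε = (((δp * ε)⁻¹ + 1) * (δp * ‖e p‖)) * ε := by ring
          _ ≤ u * l p * ε := mul_le_mul_of_nonneg_right h3 hε.le
      have step3 : ((δp * ε)⁻¹ + 1) * δp * ‖e p‖ * ε = (1 + δp * ε) * ‖e p‖ := by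
        calc ((δp * ε)⁻¹ + 1) * δp * ‖e p‖ * ε = (((δp * ε)⁻¹ + 1) * (δp * ε)) * ‖e p‖ := by ring
          _ = (1 + δp * ε) * ‖e p‖ := by rw [step1]
      have : ‖e p‖ < (1 + δp * ε) * ‖e p‖ := by nlinarith [mul_pos (mul_pos hδp hε) hepn]
      calc ‖e p‖ < (1 + δp * ε) * ‖e p‖ := this
        _ = ((δp * ε)⁻¹ + 1) * δp * ‖e p‖ * ε := step3.symm
        _ ≤ u * l p * ε := step2
        _ = r * ε := by rw [hr]
    have hmem := hball _ hdist
    have hend : endExp (t • A) p = r • (f + r⁻¹ • p) := by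
      rw [happ, smul_add, smul_smul, mul_inv_cancel₀ (ne_of_gt hr0), one_smul, add_comm]
    rw [hend, Submodule.coe_smul]
    exact sos_smul hr0.le hmem
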